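/- For all real x ≥ 0, x²/2 ≤ x·sinh(x)·cosh(x) − log(cosh x)·cosh²(x). (This inequality is equivalent to the nonpositivity of the second derivative of I(x) = log(cosh x)/x.) -/

import Mathlib

open Real

lemma log_cosh_le (x : ℝ) (hx : 0 ≤ x) : Real.log (Real.cosh x) ≤ x := by
  have h1 : Real.cosh x ≤ Real.exp x := by
    rw [Real.cosh_eq]
    have : Real.exp (-x) ≤ Real.exp x := Real.exp_le_exp.mpr (by linarith)
    linarith
  calc Real.log (Real.cosh x) ≤ Real.log (Real.exp x) :=
        Real.log_le_log (Real.cosh_pos x) h1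
    _ = x := Real.log_exp x

lemma g_hasDeriv (y : ℝ) :
    HasDerivAt (fun t => t * Real.sinh t - Real.log (Real.cosh t) * Real.cosh t)
      (y * Real.cosh y - Real.log (Real.cosh y) * Real.sinh y) y := by
  have hc := Real.cosh_pos y
  have h1 : HasDerivAt (fun t => t * Real.sinh t)
      (1 * Real.sinh y + y * Real.cosh y) y :=
    (hasDerivAt_id y).mul (Real.hasDerivAt_sinh y)
  have hlog : HasDerivAt (fun t => Real.log (Real.cosh t))
      (Real.sinh y / Real.cosh y) y :=
    (Real.hasDerivAt_cosh y).log hc.ne'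
  have h2 : HasDerivAt (fun t => Real.log (Real.cosh t) * Real.cosh t)
      ((Real.sinh y / Real.cosh y) * Real.cosh y + Real.log (Real.cosh y) * Real.sinh y) y :=
    hlog.mul (Real.hasDerivAt_cosh y)
  have : HasDerivAt (fun t => t * Real.sinh t - Real.log (Real.cosh t) * Real.cosh t) _ y :=
    h1.sub h2
  convert this using 1
  field_simp
  ring

lemma g_nonneg (x : ℝ) (hx : 0 ≤ x) :
    Real.log (Real.cosh x) * Real.cosh x ≤ x * Real.sinh x := by
  set g : ℝ → ℝ := fun t => t * Real.sinh t - Real.log (Real.cosh t) * Real.cosh t with hg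
  have hmono : MonotoneOn g (Set.Ici (0:ℝ)) := by
    apply monotoneOn_of_deriv_nonneg (convex_Ici 0)
    · exact fun y _ => (g_hasDeriv y).continuousAt.continuousWithinAt
    · intro y hy
      exact (g_hasDeriv y).differentiableAt.differentiableWithinAt
    · intro y hy
      rw [interior_Ici] at hy
      rw [(g_hasDeriv y).deriv]
      have hy0 : 0 ≤ y := le_of_lt hy
      have h1 : Real.log (Real.cosh y) * Real.sinh y ≤ y * Real.sinh y :=
        mul_le_mul_of_nonneg_right (log_cosh_le y hy0) (Real.sinh_nonneg_iff.mpr hy0)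
      have hsc : Real.sinh y ≤ Real.cosh y := by
        rw [Real.sinh_eq, Real.cosh_eq]
        have := Real.exp_pos (-y)
        linarith
      have h2 : y * Real.sinh y ≤ y * Real.cosh y :=
        mul_le_mul_of_nonneg_left hsc hy0
      linarith
  have h0 : g 0 = 0 := by simp [hg]
  have := hmono (Set.self_mem_Ici) (Set.mem_Ici.mpr hx) hx
  rw [h0] at this
  simp only [hg] at this
  linarith

lemma f_hasDeriv (y : ℝ) :
    HasDerivAt (fun t => t * Real.sinh t * Real.cosh t -
        Real.log (Real.cosh t) * (Real.cosh t) ^ 2 - t ^ 2 / 2)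
      (2 * Real.sinh y * (y * Real.sinh y - Real.log (Real.cosh y) * Real.cosh y)) y := by
  have hc := Real.cosh_pos y
  have h1 : HasDerivAt (fun t => t * Real.sinh t * Real.cosh t)
      ((1 * Real.sinh y + y * Real.cosh y) * Real.cosh y + y * Real.sinh y * Real.sinh y) y :=
    ((hasDerivAt_id y).mul (Real.hasDerivAt_sinh y)).mul (Real.hasDerivAt_cosh y)
  have hlog : HasDerivAt (fun t => Real.log (Real.cosh t))
      (Real.sinh y / Real.cosh y) y :=
    (Real.hasDerivAt_cosh y).log hc.ne'
  have hsq : HasDerivAt (fun t => (Real.cosh t) ^ 2)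
      (2 * Real.cosh y ^ (2 - 1) * Real.sinh y) y :=
    (Real.hasDerivAt_cosh y).pow 2
  have h2 : HasDerivAt (fun t => Real.log (Real.cosh t) * (Real.cosh t) ^ 2)
      ((Real.sinh y / Real.cosh y) * (Real.cosh y) ^ 2 +
        Real.log (Real.cosh y) * (2 * Real.cosh y ^ (2 - 1) * Real.sinh y)) y :=
    hlog.mul hsq
  have h3 : HasDerivAt (fun t : ℝ => t ^ 2 / 2) (2 * y ^ (2 - 1) / 2) y :=
    (hasDerivAt_pow 2 y).div_const 2
  have : HasDerivAt (fun t => t * Real.sinh t * Real.cosh t -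
      Real.log (Real.cosh t) * (Real.cosh t) ^ 2 - t ^ 2 / 2) _ y := (h1.sub h2).sub h3
  convert this using 1
  have hid : Real.cosh y ^ 2 = 1 + Real.sinh y ^ 2 := by
    have := Real.cosh_sq_sub_sinh_sq y
    nlinarith
  have e : Real.sinh y / Real.cosh y * Real.cosh y ^ 2 = Real.sinh y * Real.cosh y := by
    field_simp
  rw [e]
  norm_num
  linear_combination -y * hid

theorem sq_div_two_le (x : ℝ) (hx : 0 ≤ x) :
    x ^ 2 / 2 ≤ x * Real.sinh x * Real.cosh x - Real.log (Real.cosh x) * (Real.cosh x) ^ 2 := by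
  set f : ℝ → ℝ := fun t => t * Real.sinh t * Real.cosh t -
      Real.log (Real.cosh t) * (Real.cosh t) ^ 2 - t ^ 2 / 2 with hf
  have hmono : MonotoneOn f (Set.Ici (0:ℝ)) := by
    apply monotoneOn_of_deriv_nonneg (convex_Ici 0)
    · exact fun y _ => (f_hasDeriv y).continuousAt.continuousWithinAt
    · intro y hy
      exact (f_hasDeriv y).differentiableAt.differentiableWithinAt
    · intro y hy
      rw [interior_Ici] at hy
      rw [(f_hasDeriv y).deriv]
      have hy0 : 0 ≤ y := le_of_lt hy
      have h1 := g_nonneg y hy0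
      have h2 := Real.sinh_nonneg_iff.mpr hy0
      nlinarith
  have h0 : f 0 = 0 := by simp [hf]
  have := hmono (Set.self_mem_Ici) (Set.mem_Ici.mpr hx) hx
  rw [h0] at this
  simp only [hf] at this
  linarith
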